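/- In the two-sided weakly dependent Gaussian testing setup, suppose n_1 → ∞ and n_1/n → p_1 ∈ (0, 1] as n → ∞, and let μ_{(n_1)} = max{|μ_i| : i ∈ I_1}. If lim_{n_1→∞} √(2 log n_1)/μ_{(n_1)} < 1, then for both the two-sided adjusted Bonferroni procedure (cutoff c_Bon(2n, α)) and the two-sided Sidak procedure (cutoff c_Sid(2n, α)), AnyPwr_BS → 1 as n → ∞. -/

import Mathlib

open MeasureTheory ProbabilityTheory Filter Asymptotics Finset
open scoped Classical ENNReal NNReal

/-- The standard normal cumulative distribution function `Φ`. -/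
noncomputable def Phi (x : ℝ) : ℝ := (ProbabilityTheory.gaussianReal 0 1 (Set.Iic x)).toReal

/-- The inverse of the standard normal cdf, `Φ⁻¹`. -/
noncomputable def PhiInv : ℝ → ℝ := Function.invFun Phi

/-- The adjusted Bonferroni cutoff `c_Bon(n, α) = Φ⁻¹(1 − (−log(1−α))/n)`. -/
noncomputable def cBon (n : ℕ) (α : ℝ) : ℝ := PhiInv (1 - (-Real.log (1 - α)) / n)

/-- The Sidak cutoff `c_Sid(n, α) = Φ⁻¹((1−α)^{1/n})`. -/
noncomputable def cSid (n : ℕ) (α : ℝ) : ℝ := PhiInv ((1 - α) ^ ((1 : ℝ) / n))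

lemma Phi_apply (x : ℝ) : Phi x = ∫ t in Set.Iic x, gaussianPDFReal 0 1 t := by
  rw [Phi, gaussianReal_apply_eq_integral 0 one_ne_zero, ENNReal.toReal_ofReal]
  exact setIntegral_nonneg measurableSet_Iic (fun t _ => gaussianPDFReal_nonneg 0 1 t)

lemma gaussianPDFReal_le_one (t : ℝ) : gaussianPDFReal 0 1 t ≤ 1 := by
  rw [gaussianPDFReal]
  have h1 : Real.exp (-(t - 0)^2 / (2 * (1:ℝ≥0))) ≤ 1 := by
    rw [Real.exp_le_one_iff]
    have h0 : (0:ℝ) ≤ (t - 0)^2 := sq_nonneg _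
    have h2 : (0:ℝ) < 2 * (1:ℝ≥0) := by norm_num
    apply div_nonpos_of_nonpos_of_nonneg <;> nlinarith
  have h2 : (Real.sqrt (2 * Real.pi * (1:ℝ≥0)))⁻¹ ≤ 1 := by
    rw [inv_le_one_iff₀]
    right
    rw [show (1:ℝ) = Real.sqrt 1 by simp]
    apply Real.sqrt_le_sqrt
    have := Real.pi_gt_three
    push_cast
    nlinarith
  calc (Real.sqrt (2 * Real.pi * (1:ℝ≥0)))⁻¹ * Real.exp (-(t - 0)^2 / (2 * (1:ℝ≥0)))
      ≤ 1 * 1 := mul_le_mul h2 h1 (Real.exp_nonneg _) (by norm_num)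
    _ = 1 := by norm_num

lemma Phi_sub_eq {a b : ℝ} (hab : a ≤ b) :
    Phi b - Phi a = ∫ t in Set.Ioc a b, gaussianPDFReal 0 1 t := by
  rw [Phi_apply, Phi_apply, ← Set.Iic_union_Ioc_eq_Iic hab,
    setIntegral_union (Set.Iic_disjoint_Ioc le_rfl) measurableSet_Ioc
      (integrable_gaussianPDFReal 0 1).integrableOn
      (integrable_gaussianPDFReal 0 1).integrableOn]
  ring

lemma Phi_strictMono : StrictMono Phi := by
  intro a b hab
  have h := Phi_sub_eq hab.le
  have hpos : 0 < ∫ t in Set.Ioc a b, gaussianPDFReal 0 1 t := by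
    rw [setIntegral_pos_iff_support_of_nonneg_ae
      (ae_of_all _ (fun t => gaussianPDFReal_nonneg 0 1 t))
      (integrable_gaussianPDFReal 0 1).integrableOn]
    have hsupp : Function.support (gaussianPDFReal 0 1) ∩ Set.Ioc a b = Set.Ioc a b := by
      ext t
      simp [Function.mem_support, (gaussianPDFReal_pos 0 1 t one_ne_zero).ne']
    rw [hsupp, Real.volume_Ioc]
    exact ENNReal.ofReal_pos.mpr (by linarith)
  linarith

lemma Phi_monotone : Monotone Phi := Phi_strictMono.monotone

lemma Phi_lipschitz : LipschitzWith 1 Phi := by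
  apply LipschitzWith.of_dist_le_mul
  intro a b
  wlog hab : b ≤ a generalizing a b
  · rw [dist_comm, dist_comm a b]; exact this _ _ (le_of_not_ge hab)
  rw [Real.dist_eq, Real.dist_eq, abs_of_nonneg (sub_nonneg.mpr (Phi_monotone hab)),
    abs_of_nonneg (sub_nonneg.mpr hab), Phi_sub_eq hab, NNReal.coe_one, one_mul]
  calc (∫ t in Set.Ioc b a, gaussianPDFReal 0 1 t) ≤ ∫ _t in Set.Ioc b a, (1:ℝ) := by
        apply setIntegral_mono_on (integrable_gaussianPDFReal 0 1).integrableOn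
          (integrableOn_const (by simp [Real.volume_Ioc, ENNReal.ofReal_lt_top]))
          measurableSet_Ioc (fun t _ => gaussianPDFReal_le_one t)
    _ = a - b := by
        simp [Real.volume_Ioc, ENNReal.toReal_ofReal (sub_nonneg.mpr hab), hab]

lemma Phi_continuous : Continuous Phi := Phi_lipschitz.continuous

lemma Phi_eq_cdf : Phi = cdf (gaussianReal 0 1) :=
  funext fun x => (cdf_eq_real _ x).symm

lemma Phi_tendsto_atTop : Tendsto Phi atTop (nhds 1) := by
  rw [Phi_eq_cdf]; exact tendsto_cdf_atTop _

lemma Phi_tendsto_atBot : Tendsto Phi atBot (nhds 0) := by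
  rw [Phi_eq_cdf]; exact tendsto_cdf_atBot _

lemma exists_Phi_eq {q : ℝ} (hq : q ∈ Set.Ioo (0:ℝ) 1) : ∃ x, Phi x = q := by
  obtain ⟨a, ha⟩ := (Phi_tendsto_atBot.eventually_lt_const hq.1).exists
  obtain ⟨b, hb⟩ := (Phi_tendsto_atTop.eventually_const_lt hq.2).exists
  have hab : a ≤ b := by
    by_contra h
    exact absurd (Phi_monotone (le_of_not_ge h)) (by push_neg; linarith)
  obtain ⟨x, _, hx⟩ := intermediate_value_Icc hab Phi_continuous.continuousOn
    (Set.mem_Icc.mpr ⟨ha.le, hb.le⟩)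
  exact ⟨x, hx⟩

lemma Phi_PhiInv {q : ℝ} (hq : q ∈ Set.Ioo (0:ℝ) 1) : Phi (PhiInv q) = q :=
  Function.invFun_eq (exists_Phi_eq hq)

lemma PhiInv_le {q x : ℝ} (hq : q ∈ Set.Ioo (0:ℝ) 1) (h : q ≤ Phi x) : PhiInv q ≤ x := by
  have h2 : Phi (PhiInv q) ≤ Phi x := by rw [Phi_PhiInv hq]; exact h
  exact Phi_strictMono.le_iff_le.mp h2

lemma Phi_add_tail (x : ℝ) : Phi x + (gaussianReal 0 1 (Set.Ioi x)).toReal = 1 := by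
  have h : (gaussianReal 0 1) (Set.Iic x) + (gaussianReal 0 1) (Set.Ioi x) = 1 := by
    rw [← measure_union (Set.Iic_disjoint_Ioi le_rfl) measurableSet_Ioi,
      Set.Iic_union_Ioi, measure_univ]
  have h1 : (gaussianReal 0 1) (Set.Iic x) ≠ ⊤ := measure_ne_top _ _
  have h2 : (gaussianReal 0 1) (Set.Ioi x) ≠ ⊤ := measure_ne_top _ _
  rw [Phi, ← ENNReal.toReal_add h1 h2, h, ENNReal.toReal_one]

lemma tail_le {x : ℝ} (hx : 1 ≤ x) :
    (gaussianReal 0 1 (Set.Ioi x)).toReal ≤ Real.exp (-(x^2)/2) := by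
  have hx0 : (0:ℝ) < x := by linarith
  have htoReal : (gaussianReal 0 1 (Set.Ioi x)).toReal
      = ∫ t in Set.Ioi x, gaussianPDFReal 0 1 t := by
    rw [gaussianReal_apply_eq_integral 0 one_ne_zero, ENNReal.toReal_ofReal]
    exact setIntegral_nonneg measurableSet_Ioi (fun t _ => gaussianPDFReal_nonneg 0 1 t)
  rw [htoReal]
  have hmaj : ∀ t ∈ Set.Ioi x, gaussianPDFReal 0 1 t
      ≤ Real.exp (x^2/2) * Real.exp (-(x*t)) := by
    intro t ht
    have h1 : gaussianPDFReal 0 1 t ≤ Real.exp (-(t-0)^2 / (2 * (1:ℝ≥0))) := by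
      rw [gaussianPDFReal]
      have h2 : (Real.sqrt (2 * Real.pi * (1:ℝ≥0)))⁻¹ ≤ 1 := by
        rw [inv_le_one_iff₀]
        right
        rw [show (1:ℝ) = Real.sqrt 1 by simp]
        apply Real.sqrt_le_sqrt
        have := Real.pi_gt_three
        push_cast
        nlinarith
      nlinarith [Real.exp_nonneg (-(t - 0)^2 / (2 * (1:ℝ≥0)))]
    refine h1.trans ?_
    rw [← Real.exp_add]
    apply Real.exp_le_exp.mpr
    push_cast
    nlinarith [sq_nonneg (t - x)]
  have hint1 : IntegrableOn (fun t => Real.exp (x^2/2) * Real.exp (-(x*t))) (Set.Ioi x) := by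
    have := (exp_neg_integrableOn_Ioi x hx0).const_mul (Real.exp (x^2/2))
    simp only [neg_mul] at this
    exact this
  calc (∫ t in Set.Ioi x, gaussianPDFReal 0 1 t)
      ≤ ∫ t in Set.Ioi x, Real.exp (x^2/2) * Real.exp (-(x*t)) :=
        setIntegral_mono_on (integrable_gaussianPDFReal 0 1).integrableOn hint1
          measurableSet_Ioi hmaj
    _ = Real.exp (x^2/2) * ∫ t in Set.Ioi x, Real.exp (-(x*t)) := by
        rw [integral_const_mul]
    _ = Real.exp (x^2/2) * (x⁻¹ * Real.exp (-(x*x))) := by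
        congr 1
        have h := integral_comp_mul_left_Ioi (fun u => Real.exp (-u)) x hx0
        rw [integral_exp_neg_Ioi] at h
        simpa [smul_eq_mul] using h
    _ ≤ Real.exp (-(x^2)/2) := by
        have hxinv : x⁻¹ ≤ 1 := by
          rw [inv_le_one_iff₀]; right; exact hx
        have h3 : Real.exp (x^2/2 + -(x*x)) = Real.exp (-(x^2)/2) := by
          congr 1; ring
        calc Real.exp (x^2/2) * (x⁻¹ * Real.exp (-(x*x)))
            ≤ Real.exp (x^2/2) * (1 * Real.exp (-(x*x))) := by
              apply mul_le_mul_of_nonneg_left _ (Real.exp_nonneg _)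
              apply mul_le_mul_of_nonneg_right hxinv (Real.exp_nonneg _)
          _ = Real.exp (x^2/2 + -(x*x)) := by rw [one_mul, Real.exp_add]
          _ = Real.exp (-(x^2)/2) := h3

lemma gaussian_neg_map : (gaussianReal 0 1).map (fun y => -y) = gaussianReal 0 1 := by
  have hv : (NNReal.mk ((-1:ℝ)^2) (sq_nonneg _) * 1 : ℝ≥0) = 1 := by rw [mul_one]; exact NNReal.eq (by norm_num)
  have h := gaussianReal_map_const_mul (μ := 0) (v := 1) (-1)
  rw [hv] at h
  simp only [neg_one_mul, mul_zero, neg_zero] at h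
  exact h

lemma Phi_neg (x : ℝ) : Phi (-x) = 1 - Phi x := by
  have hmap := gaussian_neg_map
  have h1 : gaussianReal 0 1 (Set.Iic (-x)) = gaussianReal 0 1 (Set.Ici x) := by
    conv_lhs => rw [← hmap]
    rw [Measure.map_apply measurable_neg measurableSet_Iic]
    congr 1
    ext y
    simp [neg_le]
  have h2 : gaussianReal 0 1 (Set.Ici x) = gaussianReal 0 1 (Set.Ioi x) := by
    rw [← Set.Ioi_union_left]
    have hsing : gaussianReal 0 1 {x} = 0 :=
      gaussianReal_absolutelyContinuous 0 one_ne_zero (measure_singleton x)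
    apply le_antisymm
    · calc gaussianReal 0 1 (Set.Ioi x ∪ {x})
          ≤ gaussianReal 0 1 (Set.Ioi x) + gaussianReal 0 1 {x} := measure_union_le _ _
        _ = gaussianReal 0 1 (Set.Ioi x) := by rw [hsing, add_zero]
    · exact measure_mono Set.subset_union_left
  have h3 := Phi_add_tail x
  rw [Phi, h1, h2]
  linarith

lemma gauss_Iio_eq (s : ℝ) :
    gaussianReal 0 1 (Set.Iio s) = gaussianReal 0 1 (Set.Iic s) := by
  rw [← Set.Iio_union_right]
  have hsing : gaussianReal 0 1 {s} = 0 :=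
    gaussianReal_absolutelyContinuous 0 one_ne_zero (measure_singleton s)
  apply le_antisymm
  · exact measure_mono Set.subset_union_left
  · calc gaussianReal 0 1 (Set.Iio s ∪ {s})
        ≤ gaussianReal 0 1 (Set.Iio s) + gaussianReal 0 1 {s} := measure_union_le _ _
      _ = gaussianReal 0 1 (Set.Iio s) := by rw [hsing, add_zero]

lemma prob_abs_gt {Ω : Type*} [MeasurableSpace Ω] (P : Measure Ω) [IsProbabilityMeasure P]
    (f : Ω → ℝ) (m : ℝ) (hmeas : Measurable (fun ω => f ω - m))
    (hmap : P.map (fun ω => f ω - m) = gaussianReal 0 1) (hm : m ≠ 0) (τ : ℝ) :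
    Phi (|m| - τ) ≤ (P {ω | τ < |f ω|}).toReal := by
  rcases hm.lt_or_gt with hneg | hpos
  · have habs : |m| = -m := abs_of_neg hneg
    have hsub : (fun ω => f ω - m) ⁻¹' (Set.Iio (|m| - τ)) ⊆ {ω | τ < |f ω|} := by
      intro ω hω
      simp only [Set.mem_preimage, Set.mem_Iio, habs] at hω
      have h1 : f ω < -τ := by linarith
      simp only [Set.mem_setOf_eq]
      calc τ < -f ω := by linarith
        _ ≤ |f ω| := neg_le_abs _
    have hP : P ((fun ω => f ω - m) ⁻¹' (Set.Iio (|m| - τ)))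
        = gaussianReal 0 1 (Set.Iio (|m| - τ)) := by
      rw [← hmap, Measure.map_apply hmeas measurableSet_Iio]
    have hPhi : Phi (|m| - τ) = (P ((fun ω => f ω - m) ⁻¹' (Set.Iio (|m| - τ)))).toReal := by
      rw [hP, gauss_Iio_eq]; rfl
    rw [hPhi]
    exact ENNReal.toReal_mono (measure_ne_top P _) (measure_mono hsub)
  · have habs : |m| = m := abs_of_pos hpos
    have hsub : (fun ω => f ω - m) ⁻¹' (Set.Ioi (τ - m)) ⊆ {ω | τ < |f ω|} := by
      intro ω hω
      simp only [Set.mem_preimage, Set.mem_Ioi] at hω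
      have h1 : τ < f ω := by linarith
      simp only [Set.mem_setOf_eq]
      calc τ < f ω := h1
        _ ≤ |f ω| := le_abs_self _
    have hP : P ((fun ω => f ω - m) ⁻¹' (Set.Ioi (τ - m)))
        = gaussianReal 0 1 (Set.Ioi (τ - m)) := by
      rw [← hmap, Measure.map_apply hmeas measurableSet_Ioi]
    have hPhi : Phi (|m| - τ) = (P ((fun ω => f ω - m) ⁻¹' (Set.Ioi (τ - m)))).toReal := by
      rw [hP]
      have h3 := Phi_add_tail (τ - m)
      have h4 : Phi (τ - m) = Phi (-(|m| - τ)) := by rw [habs]; ring_nf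
      have h5 := Phi_neg (|m| - τ)
      rw [h4, h5] at h3
      linarith
    rw [hPhi]
    exact ENNReal.toReal_mono (measure_ne_top P _) (measure_mono hsub)

lemma sqrt_add_le' (x y : ℝ) (hx : 0 ≤ x) (hy : 0 ≤ y) :
    Real.sqrt (x + y) ≤ Real.sqrt x + Real.sqrt y := by
  have h : x + y ≤ (Real.sqrt x + Real.sqrt y)^2 := by
    nlinarith [Real.sq_sqrt hx, Real.sq_sqrt hy, Real.sqrt_nonneg x, Real.sqrt_nonneg y]
  calc Real.sqrt (x+y) ≤ Real.sqrt ((Real.sqrt x + Real.sqrt y)^2) := Real.sqrt_le_sqrt h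
    _ = _ := Real.sqrt_sq (by positivity)

lemma tendsto_sqrt_atTop' : Tendsto Real.sqrt atTop atTop :=
  tendsto_atTop_atTop_of_monotone (fun _ _ h => Real.sqrt_le_sqrt h)
    (fun b => ⟨(max b 0)^2, by
      rw [Real.sqrt_sq (le_max_right _ _)]; exact le_max_left _ _⟩)

lemma cutoff_le {α : ℝ} (hα : α ∈ Set.Ioo (0:ℝ) 1) :
    ∀ᶠ n : ℕ in atTop,
      cBon (2*n) α ≤ Real.sqrt (2 * Real.log (4 * n / (-Real.log (1-α)))) ∧
      cSid (2*n) α ≤ Real.sqrt (2 * Real.log (4 * n / (-Real.log (1-α)))) := by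
  obtain ⟨hα0, hα1⟩ := hα
  set ε : ℝ := -Real.log (1 - α) with hεdef
  have hεpos : 0 < ε := by
    rw [hεdef, neg_pos]
    exact Real.log_neg (by linarith) (by linarith)
  have hlogten : Tendsto (fun n : ℕ => 2 * Real.log (4 * n / ε)) atTop atTop := by
    apply Tendsto.const_mul_atTop (by norm_num : (0:ℝ) < 2)
    apply Real.tendsto_log_atTop.comp
    apply Tendsto.atTop_div_const hεpos
    exact Tendsto.const_mul_atTop (by norm_num : (0:ℝ) < 4) tendsto_natCast_atTop_atTop
  filter_upwards [tendsto_natCast_atTop_atTop.eventually_ge_atTop (1:ℝ),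
    tendsto_natCast_atTop_atTop.eventually_ge_atTop ε,
    hlogten.eventually_ge_atTop 1] with n hn1 hnε hnlog
  have hn0 : (0:ℝ) < n := by linarith
  have hq4 : (0:ℝ) < 4 * n / ε := by positivity
  set cn : ℝ := Real.sqrt (2 * Real.log (4 * n / ε)) with hcn
  have hc1 : 1 ≤ cn := by
    rw [hcn, show (1:ℝ) = Real.sqrt 1 by simp]
    exact Real.sqrt_le_sqrt hnlog
  have hsq : cn^2 = 2 * Real.log (4 * n / ε) := Real.sq_sqrt (by linarith)
  have htail : (gaussianReal 0 1 (Set.Ioi cn)).toReal ≤ ε / (4 * n) := by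
    refine (tail_le hc1).trans ?_
    have h1 : -(cn^2)/2 = -Real.log (4 * n / ε) := by rw [hsq]; ring
    rw [h1, Real.exp_neg, Real.exp_log hq4, inv_div]
  have hPhic : 1 - ε / (4 * n) ≤ Phi cn := by
    have := Phi_add_tail cn
    linarith
  have hhalf : ε / (2 * n) ≤ 1/2 := by
    rw [div_le_div_iff₀ (by linarith) (by norm_num)]
    linarith
  have hq2pos : 0 < ε / (2 * n) := by positivity
  have hfourtwo : ε / (4 * n) ≤ ε / (2 * n) := by
    rw [div_le_div_iff₀ (by linarith) (by linarith)]
    nlinarith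
  have hcast : ((2 * n : ℕ) : ℝ) = 2 * (n:ℝ) := by push_cast; ring
  constructor
  · rw [cBon, hcast, ← hεdef]
    apply PhiInv_le
    · constructor <;> [skip; skip]
      · linarith
      · linarith
    · linarith
  · rw [cSid, hcast]
    have hbase : (0:ℝ) < 1 - α := by linarith
    have hrw : (1-α) ^ ((1:ℝ)/(2*(n:ℝ))) = Real.exp (-(ε/(2*n))) := by
      rw [Real.rpow_def_of_pos hbase]
      congr 1
      rw [hεdef]
      field_simp
    rw [hrw]
    set s : ℝ := ε / (2*n) with hsdef
    have hexps : Real.exp (-s) * Real.exp s = 1 := by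
      rw [← Real.exp_add]; simp
    have h1 : s + 1 ≤ Real.exp s := Real.add_one_le_exp s
    have h2 : (0:ℝ) < Real.exp s := Real.exp_pos s
    have h3 : (0:ℝ) < Real.exp (-s) := Real.exp_pos _
    have hexple : Real.exp (-s) ≤ 1 - s/2 := by nlinarith
    apply PhiInv_le
    · exact ⟨h3, by rw [Real.exp_lt_one_iff]; linarith⟩
    · have : ε / (4*n) = s/2 := by rw [hsdef]; ring
      linarith

/-- `ρ_m = sup_i |ρ_{i, i+m}|`. -/
noncomputable def rhobar (ρ : ℕ → ℕ → ℝ) (m : ℕ) : ℝ := ⨆ i : ℕ, |ρ i (i + m)|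

/-- `γ = sup_{m ≥ 1} ρ_m`. -/
noncomputable def gammaSup (ρ : ℕ → ℕ → ℝ) : ℝ := ⨆ m : ℕ, rhobar ρ (m + 1)

/-- `γ_m = sup_{j ≥ m} ρ_j`. -/
noncomputable def gammaTail (ρ : ℕ → ℕ → ℝ) (m : ℕ) : ℝ := ⨆ j : {j : ℕ // m ≤ j}, rhobar ρ (j : ℕ)

/-- A weakly dependent standard Gaussian sequence: jointly Gaussian random variables,
each marginally `N(0,1)`, with correlations `ρ i j ∈ (−1,1)` for `i ≠ j`, such that
`γ = sup_{m ≥ 1} ρ_m < 1` and `ρ_m = o(1/log m)`, where `ρ_m = sup_i |ρ_{i,i+m}|`. -/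
structure IsWeakDepStdGaussian {Ω : Type*} [MeasurableSpace Ω] (P : Measure Ω)
    (X : ℕ → Ω → ℝ) (ρ : ℕ → ℕ → ℝ) : Prop where
  meas : ∀ i, Measurable (X i)
  marginal : ∀ i, P.map (X i) = gaussianReal 0 1
  jointGaussian : ∀ (s : Finset ℕ) (c : ℕ → ℝ), ∃ (m : ℝ) (v : ℝ≥0),
      P.map (fun ω => ∑ i ∈ s, c i * X i ω) = gaussianReal m v
  corr : ∀ i j, i ≠ j → ∫ ω, X i ω * X j ω ∂P = ρ i j
  corr_lt : ∀ i j, i ≠ j → |ρ i j| < 1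
  sup_lt_one : gammaSup ρ < 1
  weakDep : (fun m : ℕ => rhobar ρ m) =o[atTop] (fun m : ℕ => 1 / Real.log m)

/-- Two-sided power: if `n₁ → ∞`, `n₁/n → p₁ ∈ (0,1]`, and
`lim √(2 log n₁)/μ_{(n₁)} < 1` where `μ_{(n₁)} = max{|μ i| : i ∈ I₁}`, then for both two-sided
procedures (cutoffs `c_Bon(2n, α)` and `c_Sid(2n, α)`), `AnyPwr_BS → 1`. -/
theorem anypwr_bs_max_mean
    {Ω : Type*} [MeasurableSpace Ω] (P : Measure Ω) [IsProbabilityMeasure P]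
    (X : ℕ → Ω → ℝ) (μ : ℕ → ℝ) (ρ : ℕ → ℕ → ℝ)
    (hX : IsWeakDepStdGaussian P (fun i ω => X i ω - μ i) ρ)
    (α : ℝ) (hα : α ∈ Set.Ioo (0 : ℝ) 1)
    (hn1 : Tendsto
      (fun n : ℕ => ((Finset.range n).filter (fun i => μ i ≠ 0)).card) atTop atTop)
    (p₁ : ℝ) (hp₁ : p₁ ∈ Set.Ioc (0 : ℝ) 1)
    (hp₁lim : Tendsto
      (fun n : ℕ => ((((Finset.range n).filter (fun i => μ i ≠ 0)).card : ℝ) / n))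
      atTop (nhds p₁))
    (hratio : ∃ L < (1 : ℝ), Tendsto
      (fun n : ℕ =>
        Real.sqrt (2 * Real.log (((Finset.range n).filter (fun i => μ i ≠ 0)).card : ℝ)) /
          sSup ((fun i => |μ i|) '' {i : ℕ | i < n ∧ μ i ≠ 0}))
      atTop (nhds L)) :
    Tendsto (fun n : ℕ => (P {ω | ∃ i < n, μ i ≠ 0 ∧ cBon (2 * n) α < |X i ω|}).toReal)
        atTop (nhds 1) ∧
    Tendsto (fun n : ℕ => (P {ω | ∃ i < n, μ i ≠ 0 ∧ cSid (2 * n) α < |X i ω|}).toReal)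
        atTop (nhds 1) := by
  obtain ⟨hα0, hα1⟩ := hα
  obtain ⟨L, hL1, hLten⟩ := hratio
  set N : ℕ → ℕ := fun n => ((Finset.range n).filter (fun i => μ i ≠ 0)).card with hNdef
  set M : ℕ → ℝ := fun n => sSup ((fun i => |μ i|) '' {i : ℕ | i < n ∧ μ i ≠ 0}) with hMdef
  set ε : ℝ := -Real.log (1 - α) with hεdef
  have hεpos : 0 < ε := by
    rw [hεdef, neg_pos]
    exact Real.log_neg (by linarith) (by linarith)
  set c : ℕ → ℝ := fun n => Real.sqrt (2 * Real.log (4 * n / ε)) with hcdef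
  -- max attained
  have hNev : ∀ᶠ n in atTop, 1 ≤ N n := hn1.eventually_ge_atTop 1
  have hMax : ∀ᶠ n in atTop, ∃ i, i < n ∧ μ i ≠ 0 ∧ |μ i| = M n ∧ 0 < M n := by
    filter_upwards [hNev] with n hn
    have hne : ((Finset.range n).filter (fun i => μ i ≠ 0)).Nonempty :=
      Finset.card_pos.mp hn
    have himg : (fun i => |μ i|) '' {i : ℕ | i < n ∧ μ i ≠ 0}
        = ↑(((Finset.range n).filter (fun i => μ i ≠ 0)).image (fun i => |μ i|)) := by
      rw [Finset.coe_image]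
      congr 1
      ext i
      simp [Finset.mem_filter, Finset.mem_range]
    have hne2 : (((Finset.range n).filter (fun i => μ i ≠ 0)).image
        (fun i => |μ i|)).Nonempty := hne.image _
    have hMn : M n = (((Finset.range n).filter (fun i => μ i ≠ 0)).image
        (fun i => |μ i|)).max' hne2 := by
      rw [hMdef]
      simp only
      rw [himg, hne2.csSup_eq_max']
    obtain ⟨i, hi, hieq⟩ := Finset.mem_image.mp (Finset.max'_mem _ hne2)
    rw [Finset.mem_filter, Finset.mem_range] at hi
    refine ⟨i, hi.1, hi.2, ?_, ?_⟩
    · rw [hMn, hieq]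
    · rw [hMn, ← hieq]
      exact abs_pos.mpr hi.2
  have hMpos : ∀ᶠ n in atTop, 0 < M n := by
    filter_upwards [hMax] with n h
    obtain ⟨i, _, _, _, h4⟩ := h
    exact h4
  have hL0 : 0 ≤ L := by
    apply ge_of_tendsto hLten
    filter_upwards [hMpos] with n hMn
    exact div_nonneg (Real.sqrt_nonneg _) hMn.le
  set L' : ℝ := (L+1)/2 with hL'def
  have hL'pos : 0 < L' := by rw [hL'def]; linarith
  have hL'lt : L' < 1 := by rw [hL'def]; linarith
  have hLL' : L < L' := by rw [hL'def]; linarith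
  have hMlb : ∀ᶠ n in atTop, Real.sqrt (2 * Real.log (N n)) / L' ≤ M n := by
    filter_upwards [hLten.eventually_lt_const hLL', hMpos] with n h1 h2
    rw [div_le_iff₀ hL'pos]
    have h3 := (div_lt_iff₀ h2).mp h1
    nlinarith
  have hNgrow : ∀ᶠ n in atTop, (p₁/2) * n ≤ (N n : ℝ) := by
    filter_upwards [hp₁lim.eventually_const_lt (show p₁/2 < p₁ by linarith [hp₁.1]),
      eventually_ge_atTop 1] with n h1 h2
    have hn0 : (0:ℝ) < (n:ℝ) := by
      have : (1:ℝ) ≤ (n:ℝ) := by exact_mod_cast h2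
      linarith
    have := (lt_div_iff₀ hn0).mp h1
    linarith
  have hp2pos : (0:ℝ) < p₁/2 := by linarith [hp₁.1]
  have hlogN : ∀ᶠ n : ℕ in atTop, Real.log (p₁/2) + Real.log (n:ℝ) ≤ Real.log (N n) := by
    filter_upwards [hNgrow, eventually_ge_atTop 1] with n h1 h2
    have hn0 : (0:ℝ) < (n:ℝ) := by
      have : (1:ℝ) ≤ (n:ℝ) := by exact_mod_cast h2
      linarith
    rw [← Real.log_mul (ne_of_gt hp2pos) (ne_of_gt hn0)]
    exact Real.log_le_log (by positivity) h1
  have hcrw : ∀ᶠ n : ℕ in atTop, c n = Real.sqrt (2 * (Real.log (n:ℝ) + Real.log (4/ε))) := by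
    filter_upwards [eventually_ge_atTop 1] with n h2
    have hn0 : (0:ℝ) < (n:ℝ) := by
      have : (1:ℝ) ≤ (n:ℝ) := by exact_mod_cast h2
      linarith
    rw [hcdef]
    simp only
    congr 2
    rw [show 4 * (n:ℝ)/ε = (n:ℝ) * (4/ε) by ring,
      Real.log_mul (ne_of_gt hn0) (ne_of_gt (by positivity))]
  set a : ℝ := Real.log (p₁/2) with hadef
  set b : ℝ := Real.log (4/ε) with hbdef
  have ha0 : a ≤ 0 := Real.log_nonpos (by linarith) (by linarith [hp₁.2])
  set k : ℝ := 1/L' - 1 with hkdef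
  have hk : 0 < k := by
    rw [hkdef]
    have := one_lt_one_div hL'pos hL'lt
    linarith
  set K : ℝ := Real.sqrt (2*(-a))/L' + Real.sqrt (2*|b|) with hKdef
  have hDlb : ∀ᶠ n : ℕ in atTop, k * Real.sqrt (2 * Real.log (n:ℝ)) - K ≤ M n - c n := by
    filter_upwards [hMlb, hlogN, hcrw,
      (Real.tendsto_log_atTop.comp tendsto_natCast_atTop_atTop).eventually_ge_atTop
        (max (-a) 0)] with n h1 h2 h3 h4
    set t : ℝ := Real.log (n:ℝ) with htdef
    have ht1 : -a ≤ t := le_trans (le_max_left _ _) h4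
    have ht0 : 0 ≤ t := le_trans (le_max_right _ _) h4
    have e1 : Real.sqrt (2*t) ≤ Real.sqrt (2*(a + t)) + Real.sqrt (2*(-a)) := by
      rw [show 2*t = (2*(a+t)) + (2*(-a)) by ring]
      exact sqrt_add_le' _ _ (by linarith) (by linarith)
    have e2 : Real.sqrt (2*(a+t)) ≤ Real.sqrt (2 * Real.log (N n)) :=
      Real.sqrt_le_sqrt (by linarith)
    have e3 : c n ≤ Real.sqrt (2*t) + Real.sqrt (2*|b|) := by
      rw [h3]
      calc Real.sqrt (2 * (t + b)) ≤ Real.sqrt (2*t + 2*|b|) :=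
            Real.sqrt_le_sqrt (by nlinarith [le_abs_self b])
        _ ≤ _ := sqrt_add_le' _ _ (by linarith) (by positivity)
    have e4 : (Real.sqrt (2*t) - Real.sqrt (2*(-a)))/L' ≤ M n := by
      refine le_trans ?_ h1
      gcongr
      linarith
    have e5 : (Real.sqrt (2*t) - Real.sqrt (2*(-a)))/L'
        = (1/L') * Real.sqrt (2*t) - Real.sqrt (2*(-a))/L' := by ring
    rw [e5] at e4
    rw [hkdef, hKdef]
    have hc0 : 0 ≤ Real.sqrt (2*t) := Real.sqrt_nonneg _
    nlinarith
  have htendD : Tendsto (fun n : ℕ => M n - c n) atTop atTop := by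
    apply tendsto_atTop_mono' atTop hDlb
    apply tendsto_atTop_add_const_right
    apply Tendsto.const_mul_atTop hk
    exact tendsto_sqrt_atTop'.comp
      (Tendsto.const_mul_atTop (by norm_num : (0:ℝ) < 2)
        (Real.tendsto_log_atTop.comp tendsto_natCast_atTop_atTop))
  have hPhiD : Tendsto (fun n : ℕ => Phi (M n - c n)) atTop (nhds 1) :=
    Phi_tendsto_atTop.comp htendD
  have key : ∀ τ : ℕ → ℝ, (∀ᶠ n in atTop, τ n ≤ c n) →
      Tendsto (fun n : ℕ => (P {ω | ∃ i < n, μ i ≠ 0 ∧ τ n < |X i ω|}).toReal)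
        atTop (nhds 1) := by
    intro τ hτ
    apply tendsto_of_tendsto_of_tendsto_of_le_of_le' hPhiD tendsto_const_nhds
    · filter_upwards [hMax, hτ] with n hmax hτn
      obtain ⟨i, hin, hine, hieq, hMposn⟩ := hmax
      have hsub : {ω | τ n < |X i ω|} ⊆ {ω | ∃ j < n, μ j ≠ 0 ∧ τ n < |X j ω|} :=
        fun ω hω => ⟨i, hin, hine, hω⟩
      have h1 : Phi (|μ i| - τ n) ≤ (P {ω | τ n < |X i ω|}).toReal :=
        prob_abs_gt P (X i) (μ i) (hX.meas i) (hX.marginal i) hine (τ n)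
      have h2 : Phi (M n - c n) ≤ Phi (|μ i| - τ n) :=
        Phi_monotone (by rw [← hieq] at *; linarith)
      calc Phi (M n - c n) ≤ (P {ω | τ n < |X i ω|}).toReal := h2.trans h1
        _ ≤ _ := ENNReal.toReal_mono (measure_ne_top P _) (measure_mono hsub)
    · filter_upwards with n
      calc (P {ω | ∃ i < n, μ i ≠ 0 ∧ τ n < |X i ω|}).toReal
          ≤ (P Set.univ).toReal :=
            ENNReal.toReal_mono (measure_ne_top P _) (measure_mono (Set.subset_univ _))
        _ = 1 := by simp
  have hcut := cutoff_le ⟨hα0, hα1⟩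
  constructor
  · exact key (fun n => cBon (2*n) α) (by filter_upwards [hcut] with n h; exact h.1)
  · exact key (fun n => cSid (2*n) α) (by filter_upwards [hcut] with n h; exact h.2)
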